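/- arXiv:2009.08765 — 2 statements merged into one kernel-verified Lean document; each statement's English description precedes it below -/
import Mathlib

section
/- Let s2 > 0 and let θ, μ, a1, a2, h2 be reals. Define G2 : ℝ → ℝ by G2(P) = 4(1 − θ(1 + μP))/((a1² + a2²)(P² + P·s2) + 2s2 − 2a2·h2·P) − 2(1−θ)/(θP + s2) − (1−θ)²·P/(θP + s2)². Then G2(0) = 0, and G2 has derivative at P = 0 equal to ((1−θ)(2a2·h2 − (a1² + a2²)·s2) − (1−θ)(1−3θ) − 2θ·μ·s2)/s2². Consequently, this derivative is positive if and only if (1−θ)(2a2·h2 − (a1² + a2²)·s2) > (1−θ)(1−3θ) + 2θ·μ·s2. -/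
/-- Second derivative condition of the low-power achievability analysis:
`G2(0) = 0`, `G2'(0) = ((1−θ)(2a2h2 − (a1²+a2²)s2) − (1−θ)(1−3θ) − 2θμs2)/s2²`,
and this derivative is positive iff
`(1−θ)(2a2h2 − (a1²+a2²)s2) > (1−θ)(1−3θ) + 2θμs2`. -/
theorem stmt12 (s2 θ μ a1 a2 h2 : ℝ) (hs2 : 0 < s2) :
    (fun P : ℝ => 4 * (1 - θ * (1 + μ * P)) /
        ((a1 ^ 2 + a2 ^ 2) * (P ^ 2 + P * s2) + 2 * s2 - 2 * a2 * h2 * P)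
        - 2 * (1 - θ) / (θ * P + s2) - (1 - θ) ^ 2 * P / (θ * P + s2) ^ 2) 0 = 0 ∧
    HasDerivAt (fun P : ℝ => 4 * (1 - θ * (1 + μ * P)) /
        ((a1 ^ 2 + a2 ^ 2) * (P ^ 2 + P * s2) + 2 * s2 - 2 * a2 * h2 * P)
        - 2 * (1 - θ) / (θ * P + s2) - (1 - θ) ^ 2 * P / (θ * P + s2) ^ 2)
      (((1 - θ) * (2 * a2 * h2 - (a1 ^ 2 + a2 ^ 2) * s2)
        - (1 - θ) * (1 - 3 * θ) - 2 * θ * μ * s2) / s2 ^ 2) 0 ∧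
    (0 < ((1 - θ) * (2 * a2 * h2 - (a1 ^ 2 + a2 ^ 2) * s2)
        - (1 - θ) * (1 - 3 * θ) - 2 * θ * μ * s2) / s2 ^ 2 ↔
      (1 - θ) * (2 * a2 * h2 - (a1 ^ 2 + a2 ^ 2) * s2) >
        (1 - θ) * (1 - 3 * θ) + 2 * θ * μ * s2) := by
  have hs2' : s2 ≠ 0 := ne_of_gt hs2
  refine ⟨?_, ?_, ?_⟩
  · simp only []
    field_simp
    simp
    field_simp
    ring
  · have hid : HasDerivAt (fun P : ℝ => P) 1 0 := hasDerivAt_id 0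
    -- numerator 1
    have hn1 : HasDerivAt (fun P : ℝ => 4 * (1 - θ * (1 + μ * P))) (-(4 * (θ * μ))) 0 := by
      have : HasDerivAt (fun P : ℝ => 1 - θ * (1 + μ * P)) (-(θ * μ)) 0 := by
        simpa using ((hid.const_mul μ).const_add 1 |>.const_mul θ).const_sub 1
      simpa [mul_comm, mul_assoc] using this.const_mul 4
    have hd1 : HasDerivAt (fun P : ℝ =>
        (a1 ^ 2 + a2 ^ 2) * (P ^ 2 + P * s2) + 2 * s2 - 2 * a2 * h2 * P)
        ((a1 ^ 2 + a2 ^ 2) * s2 - 2 * a2 * h2) 0 := by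
      have hp : HasDerivAt (fun P : ℝ => P ^ 2 + P * s2) (2 * (0:ℝ) ^ 1 * 1 + 1 * s2) 0 :=
        (hid.pow 2).add (hid.mul_const s2)
      have := (((hp.const_mul (a1 ^ 2 + a2 ^ 2)).add_const (2 * s2)).sub
        (hid.const_mul (2 * a2 * h2)))
      simpa [mul_comm, mul_assoc, Pi.sub_def] using this
    have hd1ne : ((a1 ^ 2 + a2 ^ 2) * ((0:ℝ) ^ 2 + 0 * s2) + 2 * s2 - 2 * a2 * h2 * 0) ≠ 0 := by
      simp [hs2']
    have h1 := hn1.div hd1 hd1ne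
    -- term 2
    have hd2 : HasDerivAt (fun P : ℝ => θ * P + s2) θ 0 := by
      simpa using (hid.const_mul θ).add_const s2
    have hd2ne : θ * (0:ℝ) + s2 ≠ 0 := by simpa using hs2'
    have h2' := (hasDerivAt_const (0:ℝ) (2 * (1 - θ))).div hd2 hd2ne
    -- term 3
    have hd3 : HasDerivAt (fun P : ℝ => (θ * P + s2) ^ 2) (2 * (θ * 0 + s2) ^ 1 * θ) 0 :=
      hd2.pow 2
    have hd3ne : ((θ * (0:ℝ) + s2) ^ 2) ≠ 0 := by
      simpa using pow_ne_zero 2 hs2'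
    have h3 := (hid.const_mul ((1 - θ) ^ 2)).div hd3 hd3ne
    have H := (h1.sub h2').sub h3
    refine H.congr_deriv ?_
    field_simp
    ring
  · rw [div_pos_iff]
    constructor
    · rintro (⟨h, -⟩ | ⟨-, h⟩)
      · linarith
      · exact absurd h (not_lt.mpr (sq_nonneg s2))
    · intro h
      exact Or.inl ⟨by linarith, by positivity⟩
end

section
/- Let σ1², σ2², σfb1², σfb2² be positive reals, define g : (0,∞) → ℝ by g(x) = x·σfb1²/(σ1²(σ1² + σfb1²)) + σfb2²/(x·σ2²(σ2² + σfb2²)) − 2/σ2², and set x* = √(((1 + σ1²/σfb1²)/(1 + σ2²/σfb2²))·(σ1²/σ2²)). Then the following are equivalent: (i) g(x*) < 0; (ii) there exists x > 0 with g(x) < 0; (iii) σ2²/σ1² < (σ1²/σfb1² + 1)·(σ2²/σfb2² + 1). -/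
/-- Final step of the achievability proof of Theorem 1: with
`g(x) = x·σfb1²/(σ1²(σ1²+σfb1²)) + σfb2²/(x·σ2²(σ2²+σfb2²)) − 2/σ2²` and
`x* = √(((1+σ1²/σfb1²)/(1+σ2²/σfb2²))·(σ1²/σ2²))`, the following are equivalent:
(i) `g(x*) < 0`; (ii) `∃ x > 0, g(x) < 0`;
(iii) `σ2²/σ1² < (σ1²/σfb1² + 1)(σ2²/σfb2² + 1)`. -/
theorem stmt17 (s1 s2 sfb1 sfb2 : ℝ)
    (hs1 : 0 < s1) (hs2 : 0 < s2) (hsfb1 : 0 < sfb1) (hsfb2 : 0 < sfb2)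
    (g : ℝ → ℝ)
    (hg : g = fun x : ℝ =>
      x * sfb1 / (s1 * (s1 + sfb1)) + sfb2 / (x * s2 * (s2 + sfb2)) - 2 / s2)
    (xstar : ℝ)
    (hxstar : xstar = Real.sqrt ((1 + s1 / sfb1) / (1 + s2 / sfb2) * (s1 / s2))) :
    (g xstar < 0 ↔ ∃ x : ℝ, 0 < x ∧ g x < 0) ∧
    ((∃ x : ℝ, 0 < x ∧ g x < 0) ↔ s2 / s1 < (s1 / sfb1 + 1) * (s2 / sfb2 + 1)) := by
  set A : ℝ := sfb1 / (s1 * (s1 + sfb1)) with hA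
  set B : ℝ := sfb2 / (s2 * (s2 + sfb2)) with hB
  set C : ℝ := 2 / s2 with hC
  have hApos : 0 < A := by positivity
  have hBpos : 0 < B := by positivity
  have hCpos : 0 < C := by positivity
  have hform : ∀ x : ℝ, g x = A * x + B / x - C := by
    intro x
    rw [hg]
    simp only
    have e2 : sfb2 / (x * s2 * (s2 + sfb2)) = B / x := by
      rw [hB, div_div]
      congr 1
      ring
    rw [e2, hA]
    ring
  -- xstar = sqrt (B / A)
  have harg : (1 + s1 / sfb1) / (1 + s2 / sfb2) * (s1 / s2) = B / A := by
    rw [hA, hB]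
    field_simp
    ring
  have hxs : xstar = Real.sqrt (B / A) := by rw [hxstar, harg]
  have hxspos : 0 < xstar := by
    rw [hxs]; exact Real.sqrt_pos.mpr (by positivity)
  have hxs2 : xstar ^ 2 = B / A := by
    rw [hxs]; exact Real.sq_sqrt (by positivity)
  have hBeq : B = A * xstar ^ 2 := by
    rw [hxs2]; field_simp
  have hsqrtAB : Real.sqrt (A * B) = A * xstar := by
    have : A * B = (A * xstar) ^ 2 := by rw [hBeq]; ring
    rw [this, Real.sqrt_sq (by positivity)]
  have gstar : g xstar = 2 * Real.sqrt (A * B) - C := by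
    rw [hform, hsqrtAB, hBeq]
    field_simp
    ring
  -- lower bound via AM-GM
  have hlow : ∀ x : ℝ, 0 < x → 2 * Real.sqrt (A * B) - C ≤ g x := by
    intro x hx
    rw [hform]
    have h1 : Real.sqrt (A * x) * Real.sqrt (B / x) = Real.sqrt (A * B) := by
      rw [← Real.sqrt_mul (by positivity)]
      congr 1
      field_simp
    have h2 : 2 * (Real.sqrt (A * x) * Real.sqrt (B / x)) ≤
        Real.sqrt (A * x) ^ 2 + Real.sqrt (B / x) ^ 2 := by
      nlinarith [sq_nonneg (Real.sqrt (A * x) - Real.sqrt (B / x))]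
    rw [Real.sq_sqrt (by positivity), Real.sq_sqrt (by positivity)] at h2
    rw [h1] at h2
    linarith
  -- the key scalar condition
  have hkey : 2 * Real.sqrt (A * B) < C ↔
      s2 / s1 < (s1 / sfb1 + 1) * (s2 / sfb2 + 1) := by
    have h1 : 2 * Real.sqrt (A * B) < C ↔ Real.sqrt (A * B) < C / 2 := by
      constructor <;> intro h <;> linarith
    rw [h1, Real.sqrt_lt' (by positivity)]
    have hC2 : (C / 2) ^ 2 = 1 / s2 ^ 2 := by
      rw [hC]; field_simp
    rw [hC2, hA, hB]
    have hq : (s1 / sfb1 + 1) * (s2 / sfb2 + 1)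
        = (s1 + sfb1) * (s2 + sfb2) / (sfb1 * sfb2) := by
      field_simp
    rw [hq, div_mul_div_comm, div_lt_div_iff₀ (by positivity) (by positivity),
      div_lt_div_iff₀ hs1 (by positivity)]
    rw [show sfb1 * sfb2 * s2 ^ 2 = s2 * (s2 * (sfb1 * sfb2)) by ring,
      show (1 : ℝ) * (s1 * (s1 + sfb1) * (s2 * (s2 + sfb2)))
        = s2 * ((s1 + sfb1) * (s2 + sfb2) * s1) by ring,
      mul_lt_mul_iff_right₀ hs2]
  have hi : g xstar < 0 ↔ 2 * Real.sqrt (A * B) < C := by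
    rw [gstar]; constructor <;> intro h <;> linarith
  have hii : (∃ x : ℝ, 0 < x ∧ g x < 0) ↔ 2 * Real.sqrt (A * B) < C := by
    constructor
    · rintro ⟨x, hx, hgx⟩
      have := hlow x hx
      linarith
    · intro h
      exact ⟨xstar, hxspos, by rw [gstar]; linarith⟩
  exact ⟨hi.trans hii.symm, hii.trans hkey⟩
end
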